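/- For every monomial order ≺ with x_0 ≻ ... ≻ x_m, the projective reduction of a monomial does not increase it: μ̄ ⪯ μ for all monomials μ in x_0,...,x_m. -/

import Mathlib

open MvPolynomial Finset

/-- Reduce an exponent modulo `q-1`: unchanged if `≤ q-1`, otherwise the
representative in `{1,...,q-1}` congruent to it modulo `q-1`. -/
def redExp (q a : ℕ) : ℕ := if a ≤ q - 1 then a else (a - 1) % (q - 1) + 1

/-- Projective reduction of a monomial (given by its exponent vector): all exponents
below the top variable of the support are reduced modulo `q-1`, and the difference is
transferred to the exponent of the top variable. -/
noncomputable def projRed (q : ℕ) {m : ℕ} (μ : Fin (m + 1) →₀ ℕ) : Fin (m + 1) →₀ ℕ :=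
  if h : μ.support.Nonempty then
    letI ℓ := μ.support.max' h
    Finsupp.equivFunOnFinite.symm fun i =>
      if i < ℓ then redExp q (μ i)
      else if i = ℓ then μ ℓ + ∑ j ∈ Finset.univ.filter (· < ℓ), (μ j - redExp q (μ j))
      else 0
  else 0

/-- Projective reduction of a polynomial: the linear extension of projective
reduction of monomials. -/
noncomputable def polyRed (q : ℕ) {m : ℕ} {k : Type} [CommRing k]
    (f : MvPolynomial (Fin (m + 1)) k) : MvPolynomial (Fin (m + 1)) k :=
  f.support.sum fun μ => monomial (projRed q μ) (coeff μ f)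

/-- The ideal generated by the Fermat polynomials `X i ^ q * X j - X i * X j ^ q`. -/
noncomputable def fermatIdeal (q m : ℕ) (k : Type) [CommRing k] : Ideal (MvPolynomial (Fin (m + 1)) k) :=
  Ideal.span {f | ∃ i j : Fin (m + 1), i < j ∧ f = X i ^ q * X j - X i * X j ^ q}

/-- The leading exponent (exponent vector of the leading monomial) of a multivariate
polynomial with respect to a monomial order. -/
noncomputable def lmExp {σ : Type} (mo : MonomialOrder σ) {R : Type} [CommSemiring R]
    (f : MvPolynomial σ R) : σ →₀ ℕ :=
  mo.toSyn.symm (f.support.sup fun μ => mo.toSyn μ)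


lemma redExp_le' (q a : ℕ) : redExp q a ≤ a := by
  unfold redExp
  split
  · exact le_rfl
  · rename_i h
    have := Nat.mod_le (a - 1) (q - 1)
    omega

/-- Projective reduction does not increase a monomial with respect to any monomial order in
which `x_0 ≻ x_1 ≻ ... ≻ x_m`. -/
theorem projRed_le (q m : ℕ) (hq : IsPrimePow q)
    (mo : MonomialOrder (Fin (m + 1)))
    (hvar : ∀ i j : Fin (m + 1), i < j →
      mo.toSyn (Finsupp.single j 1) < mo.toSyn (Finsupp.single i 1))
    (μ : Fin (m + 1) →₀ ℕ) :
    mo.toSyn (projRed q μ) ≤ mo.toSyn μ := by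
  by_cases h : μ.support.Nonempty
  · set ℓ := μ.support.max' h with hℓ
    set d : Fin (m+1) → ℕ := fun j => μ j - redExp q (μ j) with hd
    set S := Finset.univ.filter (· < ℓ) with hS
    have hzero : ∀ i, ℓ < i → μ i = 0 := by
      intro i hi
      by_contra hne
      exact absurd (Finset.le_max' _ _ (Finsupp.mem_support_iff.mpr hne)) (not_le.mpr hi)
    have hproj : ∀ i, projRed q μ i =
        if i < ℓ then redExp q (μ i)
        else if i = ℓ then μ ℓ + ∑ j ∈ S, d j else 0 := by
      intro i
      simp only [projRed, dif_pos h]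
      rfl
    have E : projRed q μ + ∑ j ∈ S, Finsupp.single j (d j)
        = μ + Finsupp.single ℓ (∑ j ∈ S, d j) := by
      ext i
      simp only [Finsupp.add_apply, Finsupp.finset_sum_apply, Finsupp.single_apply,
        Finset.sum_ite_eq' S i, hproj]
      rcases lt_trichotomy i ℓ with hi | hi | hi
      · have hiS : i ∈ S := by simp [hS, hi]
        have := redExp_le' q (μ i)
        simp [hi, hiS, hd, hℓ, Ne.symm (ne_of_lt hi)]
        simp only [if_pos (show i < μ.support.max' h from hi), if_neg (show μ.support.max' h ≠ i from (ne_of_lt hi).symm)]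
        omega
      · have hiS : i ∉ S := by simp [hS, hi]
        simp [hi, hiS]
        intro hc
        exact absurd hc (hi ▸ hiS)
      · have hiS : i ∉ S := by simp [hS, not_lt.mpr (le_of_lt hi)]
        simp [not_lt.mpr (le_of_lt hi), (ne_of_gt hi), hiS, hzero i hi, Ne.symm (ne_of_gt hi)]
    have h1 : ∀ (i : Fin (m+1)) (n : ℕ),
        mo.toSyn (Finsupp.single i n) = n • mo.toSyn (Finsupp.single i 1) := by
      intro i n
      rw [← map_nsmul]
      congr 1
      simp [Finsupp.smul_single, smul_eq_mul]
    have key : mo.toSyn (Finsupp.single ℓ (∑ j ∈ S, d j))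
        ≤ ∑ j ∈ S, mo.toSyn (Finsupp.single j (d j)) := by
      have hsingle : (Finsupp.single ℓ (∑ j ∈ S, d j) : Fin (m+1) →₀ ℕ)
          = ∑ j ∈ S, Finsupp.single ℓ (d j) := map_sum (Finsupp.singleAddHom ℓ) d S
      rw [hsingle, map_sum]
      apply Finset.sum_le_sum
      intro j hj
      rw [h1 ℓ (d j), h1 j (d j)]
      have hjℓ : j < ℓ := by simpa [hS] using hj
      exact nsmul_le_nsmul_right (le_of_lt (hvar j ℓ hjℓ)) (d j)
    have E' := congrArg mo.toSyn E
    rw [map_add, map_add, map_sum] at E'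
    have : mo.toSyn (projRed q μ) + ∑ j ∈ S, mo.toSyn (Finsupp.single j (d j))
        ≤ mo.toSyn μ + ∑ j ∈ S, mo.toSyn (Finsupp.single j (d j)) := by
      rw [E']
      exact add_le_add_right key _
    exact le_of_add_le_add_right this
  · have hμ : μ = 0 := by
      rw [← Finsupp.support_eq_empty]
      exact Finset.not_nonempty_iff_eq_empty.mp h
    simp [projRed, h, hμ]
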